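/- (Proposition 1.2, BLER) Fix N ≥ 0, m > 0 and γ̇ > 0. Let q₁, q₂ > 0 satisfy 1 − ρ(γ̇)·qᵢ/√m > 0 for i = 1,2, let λ ∈ [0,1], and let q > 0 satisfy Q(q) = λ·Q(q₁) + (1−λ)·Q(q₂). Then F(q) ≤ λ·F(q₁) + (1−λ)·F(q₂), where F(q) = exp((N·ln2/m + μ(γ̇)·q/√m)/(1 − ρ(γ̇)·q/√m)) − 1; that is, the EAR function is convex with respect to the block error rate ε. -/

import Mathlib

set_option maxHeartbeats 1000000


open MeasureTheory

/-- The Gaussian Q-function Q(x) = (1/√(2π))·∫ₓ^∞ exp(−t²/2) dt. -/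
noncomputable def Qfun (x : ℝ) : ℝ :=
  (Real.sqrt (2 * Real.pi))⁻¹ * ∫ t in Set.Ioi x, Real.exp (-t ^ 2 / 2)

/-- ρ(γ) = 1/((1+γ)·√(γ²+2γ)) -/
noncomputable def rho (γ : ℝ) : ℝ := 1 / ((1 + γ) * Real.sqrt (γ ^ 2 + 2 * γ))

/-- μ(γ) = √(γ²+2γ)/(1+γ) − ln(1+γ)/((1+γ)·√(γ²+2γ)) -/
noncomputable def mu (γ : ℝ) : ℝ :=
  Real.sqrt (γ ^ 2 + 2 * γ) / (1 + γ) -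
    Real.log (1 + γ) / ((1 + γ) * Real.sqrt (γ ^ 2 + 2 * γ))

/-- The EAR function expressed through q = Q⁻¹(ε):
F(q) = exp((N·ln2/m + μ(γ̇)·q/√m)/(1 − ρ(γ̇)·q/√m)) − 1. -/
noncomputable def Fear (N m γ' q : ℝ) : ℝ :=
  Real.exp ((N * Real.log 2 / m + mu γ' * q / Real.sqrt m) /
    (1 - rho γ' * q / Real.sqrt m)) - 1

open Set

lemma gauss_int : Integrable (fun t : ℝ => Real.exp (-t ^ 2 / 2)) := by
  have h := integrable_exp_neg_mul_sq (b := (1:ℝ)/2) (by norm_num)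
  have he : (fun t : ℝ => Real.exp (-t ^ 2 / 2))
      = fun t : ℝ => Real.exp (-(1/2) * t ^ 2) := by
    funext t; congr 1; ring
  rw [he]; exact h

lemma Qdecomp {x : ℝ} (hx : 0 ≤ x) :
    Qfun x = Qfun 0 - (Real.sqrt (2 * Real.pi))⁻¹ *
      ∫ t in (0:ℝ)..x, Real.exp (-t ^ 2 / 2) := by
  unfold Qfun
  rw [intervalIntegral.integral_of_le hx]
  have h : (∫ t in Ioc (0:ℝ) x, Real.exp (-t ^ 2 / 2))
      + ∫ t in Ioi x, Real.exp (-t ^ 2 / 2)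
      = ∫ t in Ioi (0:ℝ), Real.exp (-t ^ 2 / 2) := by
    rw [← MeasureTheory.setIntegral_union (Ioc_disjoint_Ioi le_rfl) measurableSet_Ioi
      gauss_int.integrableOn gauss_int.integrableOn, Ioc_union_Ioi_eq_Ioi hx]
  rw [← h]; ring

lemma Q_hasDerivAt {x : ℝ} (hx : 0 < x) :
    HasDerivAt Qfun (-((Real.sqrt (2 * Real.pi))⁻¹ * Real.exp (-x ^ 2 / 2))) x := by
  have hcont : Continuous (fun t : ℝ => Real.exp (-t ^ 2 / 2)) := by fun_prop
  have h1 : HasDerivAt (fun y => ∫ t in (0:ℝ)..y, Real.exp (-t ^ 2 / 2))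
      (Real.exp (-x ^ 2 / 2)) x :=
    intervalIntegral.integral_hasDerivAt_right gauss_int.intervalIntegrable
      (hcont.stronglyMeasurableAtFilter _ _) hcont.continuousAt
  have hG := (h1.const_mul ((Real.sqrt (2 * Real.pi))⁻¹)).const_sub (Qfun 0)
  refine hG.congr_of_eventuallyEq ?_
  filter_upwards [eventually_gt_nhds hx] with y hy
  exact Qdecomp hy.le

lemma Q_contOn : ContinuousOn Qfun (Ici (0:ℝ)) := by
  have hc : Continuous (fun y : ℝ => Qfun 0 - (Real.sqrt (2 * Real.pi))⁻¹ *
      ∫ t in (0:ℝ)..y, Real.exp (-t ^ 2 / 2)) :=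
    continuous_const.sub (continuous_const.mul
      (intervalIntegral.continuous_primitive
        (fun _ _ => gauss_int.intervalIntegrable) 0))
  exact hc.continuousOn.congr fun y hy => Qdecomp hy

lemma Q_convex : ConvexOn ℝ (Ici (0:ℝ)) Qfun := by
  apply MonotoneOn.convexOn_of_deriv (convex_Ici 0) Q_contOn
  · rw [interior_Ici]
    exact fun x hx => ((Q_hasDerivAt hx).differentiableAt).differentiableWithinAt
  · rw [interior_Ici]
    intro x hx y hy hxy
    rw [(Q_hasDerivAt hx).deriv, (Q_hasDerivAt hy).deriv]
    have hC : 0 < (Real.sqrt (2 * Real.pi))⁻¹ := by positivity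
    have hxy2 : Real.exp (-y ^ 2 / 2) ≤ Real.exp (-x ^ 2 / 2) := by
      apply Real.exp_le_exp.2
      have hx0 : (0:ℝ) < x := hx
      nlinarith
    nlinarith

lemma Q_strictAnti : StrictAntiOn Qfun (Ici (0:ℝ)) := by
  apply strictAntiOn_of_deriv_neg (convex_Ici 0) Q_contOn
  intro x hx
  rw [interior_Ici] at hx
  rw [(Q_hasDerivAt hx).deriv]
  have : 0 < (Real.sqrt (2 * Real.pi))⁻¹ * Real.exp (-x ^ 2 / 2) := by positivity
  linarith

lemma inv_convex {d₁ d₂ lam : ℝ} (h₁ : 0 < d₁) (h₂ : 0 < d₂) (hl : 0 ≤ lam)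
    (hl' : lam ≤ 1) (hd : 0 < lam * d₁ + (1 - lam) * d₂) :
    (lam * d₁ + (1 - lam) * d₂)⁻¹ ≤ lam * d₁⁻¹ + (1 - lam) * d₂⁻¹ := by
  rw [inv_eq_one_div, ← one_div d₁, ← one_div d₂]
  have e : lam * (1 / d₁) + (1 - lam) * (1 / d₂)
      = (lam * d₂ + (1 - lam) * d₁) / (d₁ * d₂) := by
    field_simp
    try ring
  rw [e, div_le_div_iff₀ hd (by positivity)]
  nlinarith [mul_nonneg (mul_nonneg hl (sub_nonneg.2 hl')) (sq_nonneg (d₁ - d₂))]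

lemma E_eq (a b c t : ℝ) (hc : c ≠ 0) (hd : (1 - c * t) ≠ 0) :
    (a + b * t) / (1 - c * t) = (a * c + b) / c * (1 - c * t)⁻¹ - b / c := by
  have hd' : 1 - t * c ≠ 0 := by rwa [mul_comm] at hd
  field_simp
  ring

/-- The EAR function is convex w.r.t. the BLER ε. -/
theorem stmt_13 (N m γ' q₁ q₂ q lam : ℝ) (hN : 0 ≤ N) (hm : 0 < m) (hγ' : 0 < γ')
    (hq₁ : 0 < q₁) (hq₂ : 0 < q₂)
    (hpos₁ : 0 < 1 - rho γ' * q₁ / Real.sqrt m)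
    (hpos₂ : 0 < 1 - rho γ' * q₂ / Real.sqrt m)
    (hlam₀ : 0 ≤ lam) (hlam₁ : lam ≤ 1) (hq : 0 < q)
    (hQ : Qfun q = lam * Qfun q₁ + (1 - lam) * Qfun q₂) :
    Fear N m γ' q ≤ lam * Fear N m γ' q₁ + (1 - lam) * Fear N m γ' q₂ := by
  have hsm : 0 < Real.sqrt m := Real.sqrt_pos.2 hm
  have hs : 0 < γ' ^ 2 + 2 * γ' := by nlinarith
  have hsq : 0 < Real.sqrt (γ' ^ 2 + 2 * γ') := Real.sqrt_pos.2 hs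
  have h1γ : 0 < 1 + γ' := by linarith
  have hrho : 0 < rho γ' := by unfold rho; positivity
  have hmu : 0 ≤ mu γ' := by
    unfold mu
    rw [sub_nonneg, div_le_div_iff₀ (by positivity) h1γ]
    have hlog : Real.log (1 + γ') ≤ γ' := by
      have := Real.log_le_sub_one_of_pos h1γ; linarith
    have hms : Real.sqrt (γ' ^ 2 + 2 * γ') * Real.sqrt (γ' ^ 2 + 2 * γ')
        = γ' ^ 2 + 2 * γ' := Real.mul_self_sqrt hs.le
    nlinarith
  set a := N * Real.log 2 / m with ha_def
  set b := mu γ' / Real.sqrt m with hb_def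
  set c := rho γ' / Real.sqrt m with hc_def
  have ha : 0 ≤ a := by
    rw [ha_def]
    exact div_nonneg (mul_nonneg hN (Real.log_nonneg one_le_two)) hm.le
  have hb : 0 ≤ b := div_nonneg hmu hsm.le
  have hc : 0 < c := div_pos hrho hsm
  have hE : ∀ x : ℝ, Fear N m γ' x = Real.exp ((a + b * x) / (1 - c * x)) - 1 := by
    intro x
    unfold Fear
    have h1 : N * Real.log 2 / m + mu γ' * x / Real.sqrt m = a + b * x := by
      rw [ha_def, hb_def]; ring
    have h2 : 1 - rho γ' * x / Real.sqrt m = 1 - c * x := by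
      rw [hc_def]; ring
    rw [h1, h2]
  have hd₁ : 0 < 1 - c * q₁ := by
    have h2 : 1 - rho γ' * q₁ / Real.sqrt m = 1 - c * q₁ := by rw [hc_def]; ring
    linarith [h2 ▸ hpos₁]
  have hd₂ : 0 < 1 - c * q₂ := by
    have h2 : 1 - rho γ' * q₂ / Real.sqrt m = 1 - c * q₂ := by rw [hc_def]; ring
    linarith [h2 ▸ hpos₂]
  set p := lam * q₁ + (1 - lam) * q₂ with hp_def
  have hp : 0 < p := by
    rw [hp_def]
    rcases lt_or_ge lam 1 with h | h
    · nlinarith [mul_pos (by linarith : (0:ℝ) < 1 - lam) hq₂, mul_nonneg hlam₀ hq₁.le]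
    · have hl1 : lam = 1 := le_antisymm hlam₁ h
      subst hl1
      simpa using hq₁
  have hdpeq : 1 - c * p = lam * (1 - c * q₁) + (1 - lam) * (1 - c * q₂) := by
    rw [hp_def]; ring
  have hdp : 0 < 1 - c * p := by
    rw [hdpeq]
    rcases lt_or_ge lam 1 with h | h
    · nlinarith [mul_pos (by linarith : (0:ℝ) < 1 - lam) hd₂, mul_nonneg hlam₀ hd₁.le]
    · have hl1 : lam = 1 := le_antisymm hlam₁ h
      subst hl1
      simpa using hd₁
  -- Step 1: q ≤ p
  have hQp : Qfun p ≤ lam * Qfun q₁ + (1 - lam) * Qfun q₂ := by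
    have h2 := Q_convex.2 (mem_Ici.2 hq₁.le) (mem_Ici.2 hq₂.le) hlam₀
      (show (0:ℝ) ≤ 1 - lam by linarith) (show lam + (1 - lam) = 1 by ring)
    simpa [smul_eq_mul] using h2
  have hqp : q ≤ p := by
    by_contra h
    push_neg at h
    have := Q_strictAnti (mem_Ici.2 hp.le) (mem_Ici.2 hq.le) h
    rw [hQ] at this
    linarith
  -- Step 2: monotonicity of F
  have hmono : Fear N m γ' q ≤ Fear N m γ' p := by
    rw [hE q, hE p]
    apply sub_le_sub_right
    apply Real.exp_le_exp.2
    apply div_le_div₀ (add_nonneg ha (mul_nonneg hb hp.le))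
      (by nlinarith) hdp (by nlinarith)
  -- Step 3: convexity of F
  have hinv : (1 - c * p)⁻¹ ≤ lam * (1 - c * q₁)⁻¹ + (1 - lam) * (1 - c * q₂)⁻¹ := by
    rw [hdpeq]
    exact inv_convex hd₁ hd₂ hlam₀ hlam₁ (hdpeq ▸ hdp)
  have hK : 0 ≤ (a * c + b) / c :=
    div_nonneg (add_nonneg (mul_nonneg ha hc.le) hb) hc.le
  have hEp : (a + b * p) / (1 - c * p)
      ≤ lam * ((a + b * q₁) / (1 - c * q₁))
        + (1 - lam) * ((a + b * q₂) / (1 - c * q₂)) := by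
    rw [E_eq a b c p hc.ne' hdp.ne', E_eq a b c q₁ hc.ne' hd₁.ne',
      E_eq a b c q₂ hc.ne' hd₂.ne']
    have h2 := mul_le_mul_of_nonneg_left hinv hK
    have expand : lam * ((a * c + b) / c * (1 - c * q₁)⁻¹ - b / c)
        + (1 - lam) * ((a * c + b) / c * (1 - c * q₂)⁻¹ - b / c)
        = (a * c + b) / c * (lam * (1 - c * q₁)⁻¹ + (1 - lam) * (1 - c * q₂)⁻¹)
          - b / c := by ring
    rw [expand]
    linarith
  have hexp : Real.exp (lam * ((a + b * q₁) / (1 - c * q₁))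
      + (1 - lam) * ((a + b * q₂) / (1 - c * q₂)))
      ≤ lam * Real.exp ((a + b * q₁) / (1 - c * q₁))
        + (1 - lam) * Real.exp ((a + b * q₂) / (1 - c * q₂)) := by
    simpa [smul_eq_mul] using convexOn_exp.2 (mem_univ ((a + b * q₁) / (1 - c * q₁)))
      (mem_univ ((a + b * q₂) / (1 - c * q₂))) hlam₀ (by linarith) (by ring)
  have hconv : Fear N m γ' p ≤ lam * Fear N m γ' q₁ + (1 - lam) * Fear N m γ' q₂ := by
    rw [hE p, hE q₁, hE q₂]
    have h3 := Real.exp_le_exp.2 hEp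
    have expand : lam * (Real.exp ((a + b * q₁) / (1 - c * q₁)) - 1)
        + (1 - lam) * (Real.exp ((a + b * q₂) / (1 - c * q₂)) - 1)
        = lam * Real.exp ((a + b * q₁) / (1 - c * q₁))
          + (1 - lam) * Real.exp ((a + b * q₂) / (1 - c * q₂)) - 1 := by ring
    rw [expand]
    linarith
  linarith
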